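/- arXiv:2012.14323 — 5 statements merged into one kernel-verified Lean document; each statement's English description precedes it below -/
import Mathlib

section
/- Let T be a positive integer, let s_1,…,s_T > 0, let μ_1,…,μ_T > 0, and let G > 0. Define α = Σ_{j=1}^T √(μ_j s_j) and β = G + Σ_{j=1}^T s_j, and set λ*_j = (β/α)·√(μ_j s_j) − s_j for each j. If λ*_j ≥ 0 for every j, then λ* is a feasible point (i.e., λ*_j ≥ 0 for all j and Σ_{j=1}^T λ*_j ≤ G) and it maximizes Φ(λ) = Σ_{j=1}^T μ_j·λ_j/(λ_j + s_j) over all λ ∈ ℝ^T with λ_j ≥ 0 for all j and Σ_{j=1}^T λ_j ≤ G. -/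
open Finset Real

/-- The water-filling allocation `λ*_j = (β/α)·√(μ_j s_j) − s_j` (when
nonnegative) is feasible and maximizes `Φ(λ) = Σ_j μ_j·λ_j/(λ_j + s_j)` over the set
`{λ : λ_j ≥ 0, Σ_j λ_j ≤ G}`. -/
theorem stmt0 (T : ℕ) (hT : 0 < T) (s μ : Fin T → ℝ)
    (hs : ∀ j, 0 < s j) (hμ : ∀ j, 0 < μ j) (G : ℝ) (hG : 0 < G)
    (α β : ℝ) (hα : α = ∑ j, Real.sqrt (μ j * s j)) (hβ : β = G + ∑ j, s j)
    (lam : Fin T → ℝ) (hlam : ∀ j, lam j = (β / α) * Real.sqrt (μ j * s j) - s j)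
    (hpos : ∀ j, 0 ≤ lam j) :
    ((∀ j, 0 ≤ lam j) ∧ (∑ j, lam j) ≤ G) ∧
    ∀ l : Fin T → ℝ, (∀ j, 0 ≤ l j) → (∑ j, l j) ≤ G →
      (∑ j, μ j * l j / (l j + s j)) ≤ (∑ j, μ j * lam j / (lam j + s j)) := by
  have ha : ∀ j, 0 < μ j * s j := fun j => mul_pos (hμ j) (hs j)
  have hsq : ∀ j, 0 < Real.sqrt (μ j * s j) := fun j => Real.sqrt_pos.2 (ha j)
  have hne : (Finset.univ : Finset (Fin T)).Nonempty := ⟨⟨0, hT⟩, Finset.mem_univ _⟩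
  have hα0 : 0 < α := by
    rw [hα]; exact Finset.sum_pos (fun j _ => hsq j) hne
  have hβ0 : 0 < β := by
    rw [hβ]
    exact add_pos hG (Finset.sum_pos (fun j _ => hs j) hne)
  have hsum : (∑ j, lam j) = G := by
    have h1 : (∑ j, lam j) = (β / α) * α - ∑ j, s j := by
      simp only [hlam, Finset.sum_sub_distrib, ← Finset.mul_sum, hα]
    rw [h1, div_mul_cancel₀ _ (ne_of_gt hα0), hβ]
    ring
  refine ⟨⟨hpos, hsum.le⟩, ?_⟩
  intro l hl hlsum
  have hx : ∀ j, 0 < l j + s j := fun j => add_pos_of_nonneg_of_pos (hl j) (hs j)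
  have hx' : ∀ j, 0 < lam j + s j := fun j => add_pos_of_nonneg_of_pos (hpos j) (hs j)
  have hxstar : ∀ j, lam j + s j = (β / α) * Real.sqrt (μ j * s j) := by
    intro j; rw [hlam j]; ring
  -- rewrite μ j * v j / (v j + s j) = μ j - μ j * s j / (v j + s j)
  have rewr : ∀ (v : Fin T → ℝ), (∀ j, 0 < v j + s j) →
      (∑ j, μ j * v j / (v j + s j)) = (∑ j, μ j) - ∑ j, μ j * s j / (v j + s j) := by
    intro v hv
    rw [← Finset.sum_sub_distrib]
    refine Finset.sum_congr rfl fun j _ => ?_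
    rw [eq_sub_iff_add_eq, ← add_div, ← mul_add, add_comm (v j) (s j)]
    exact mul_div_cancel_right₀ _ (by rw [add_comm]; exact (hv j).ne')
  -- value at the water-filling point
  have keystar : (∑ j, μ j * s j / (lam j + s j)) = α ^ 2 / β := by
    have hterm : ∀ j, μ j * s j / (lam j + s j) = (α / β) * Real.sqrt (μ j * s j) := by
      intro j
      rw [hxstar j]
      rw [show μ j * s j / ((β / α) * Real.sqrt (μ j * s j))
          = (α / β) * (μ j * s j / Real.sqrt (μ j * s j)) by
        have h1 := hβ0.ne'
        have h2 := (hsq j).ne'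
        have h3 := hα0.ne'
        have h4 : Real.sqrt (μ j * s j) * Real.sqrt (μ j * s j) = μ j * s j :=
          Real.mul_self_sqrt (ha j).le
        field_simp]
      rw [Real.div_sqrt]
    simp only [hterm]
    rw [← Finset.mul_sum, ← hα]
    ring
  -- Cauchy–Schwarz (Sedrakyan) bound for arbitrary feasible l
  have hxs : (∑ j, (l j + s j)) ≤ β := by
    rw [hβ, Finset.sum_add_distrib]
    linarith
  have hxspos : 0 < ∑ j, (l j + s j) := Finset.sum_pos (fun j _ => hx j) hne
  have cs : α ^ 2 / (∑ j, (l j + s j)) ≤ ∑ j, μ j * s j / (l j + s j) := by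
    have h := Finset.sq_sum_div_le_sum_sq_div Finset.univ
      (fun j => Real.sqrt (μ j * s j)) (g := fun j => l j + s j) (fun j _ => hx j)
    have hsq' : ∀ j, Real.sqrt (μ j * s j) ^ 2 = μ j * s j :=
      fun j => Real.sq_sqrt (ha j).le
    simpa only [hsq', ← hα] using h
  have key : α ^ 2 / β ≤ ∑ j, μ j * s j / (l j + s j) := by
    refine le_trans ?_ cs
    exact div_le_div_of_nonneg_left (sq_nonneg α) hxspos hxs
  rw [rewr l hx, rewr lam hx', keystar]
  linarith
end

section
/- Let T be a positive integer, let s_1,…,s_T > 0, let μ_1,…,μ_T > 0, and let G > 0. Define α = Σ_{j=1}^T √(μ_j s_j) and β = G + Σ_{j=1}^T s_j. Then for every λ ∈ ℝ^T with λ_j ≥ 0 for all j and Σ_{j=1}^T λ_j ≤ G, one has Σ_{j=1}^T μ_j·λ_j/(λ_j + s_j) ≤ Σ_{j=1}^T μ_j − α²/β. -/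
open Finset Real

/-- For every feasible allocation `λ` (componentwise nonnegative with
`Σ_j λ_j ≤ G`), the total freshness satisfies `Σ_j μ_j·λ_j/(λ_j+s_j) ≤ Σ_j μ_j − α²/β`,
where `α = Σ_j √(μ_j s_j)` and `β = G + Σ_j s_j`. -/
theorem stmt1 (T : ℕ) (hT : 0 < T) (s μ : Fin T → ℝ)
    (hs : ∀ j, 0 < s j) (hμ : ∀ j, 0 < μ j) (G : ℝ) (hG : 0 < G)
    (α β : ℝ) (hα : α = ∑ j, Real.sqrt (μ j * s j)) (hβ : β = G + ∑ j, s j)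
    (l : Fin T → ℝ) (hl : ∀ j, 0 ≤ l j) (hsum : (∑ j, l j) ≤ G) :
    (∑ j, μ j * l j / (l j + s j)) ≤ (∑ j, μ j) - α ^ 2 / β := by
  have hD : ∀ j, 0 < l j + s j := fun j => add_pos_of_nonneg_of_pos (hl j) (hs j)
  have hβpos : 0 < β := by
    have : 0 < ∑ j, s j :=
      Finset.sum_pos (fun j _ => hs j) (Finset.univ_nonempty_iff.mpr ⟨⟨0, hT⟩⟩)
    rw [hβ]; linarith
  have hrw : ∀ j, μ j * l j / (l j + s j) = μ j - μ j * s j / (l j + s j) := by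
    intro j
    rw [eq_sub_iff_add_eq, ← add_div,
      show μ j * l j + μ j * s j = μ j * (l j + s j) by ring,
      mul_div_assoc, div_self (hD j).ne', mul_one]
  have hsumD : (∑ j, (l j + s j)) ≤ β := by
    rw [Finset.sum_add_distrib, hβ]
    linarith
  have hQpos : 0 < ∑ j, μ j * s j / (l j + s j) := by
    apply Finset.sum_pos
    · intro j _
      exact div_pos (mul_pos (hμ j) (hs j)) (hD j)
    · exact Finset.univ_nonempty_iff.mpr ⟨⟨0, hT⟩⟩
  have hcs : α ^ 2 ≤ (∑ j, μ j * s j / (l j + s j)) * β := by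
    have key : α ^ 2 ≤ (∑ j, μ j * s j / (l j + s j)) * (∑ j, (l j + s j)) := by
      rw [hα]
      have heq : ∀ j : Fin T, Real.sqrt (μ j * s j)
          = Real.sqrt (μ j * s j / (l j + s j)) * Real.sqrt (l j + s j) := by
        intro j
        rw [← Real.sqrt_mul (div_nonneg (mul_pos (hμ j) (hs j)).le (hD j).le),
          div_mul_cancel₀ _ (hD j).ne']
      calc (∑ j, Real.sqrt (μ j * s j)) ^ 2
          = (∑ j, Real.sqrt (μ j * s j / (l j + s j)) * Real.sqrt (l j + s j)) ^ 2 := by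
            congr 1; exact Finset.sum_congr rfl fun j _ => heq j
        _ ≤ (∑ j, Real.sqrt (μ j * s j / (l j + s j)) ^ 2) * (∑ j, Real.sqrt (l j + s j) ^ 2) :=
            Finset.sum_mul_sq_le_sq_mul_sq _ _ _
        _ = (∑ j, μ j * s j / (l j + s j)) * (∑ j, (l j + s j)) := by
            congr 1 <;> apply Finset.sum_congr rfl <;> intro j _
            · exact Real.sq_sqrt (div_nonneg (mul_pos (hμ j) (hs j)).le (hD j).le)
            · exact Real.sq_sqrt (hD j).le
    exact key.trans (by nlinarith)
  have hdiv : α ^ 2 / β ≤ ∑ j, μ j * s j / (l j + s j) := by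
    rw [div_le_iff₀ hβpos]
    exact hcs
  calc (∑ j, μ j * l j / (l j + s j))
      = ∑ j, (μ j - μ j * s j / (l j + s j)) := Finset.sum_congr rfl fun j _ => hrw j
    _ = (∑ j, μ j) - ∑ j, μ j * s j / (l j + s j) := Finset.sum_sub_distrib _ _
    _ ≤ (∑ j, μ j) - α ^ 2 / β := by linarith
end

section
/- Let T be a positive integer, let s_1,…,s_T > 0, let μ_1,…,μ_T > 0, and let G > 0. Suppose λ* ∈ ℝ^T and δ > 0 satisfy λ*_j = max{ √(μ_j s_j / δ) − s_j , 0 } for every j and Σ_{j=1}^T λ*_j = G. Then λ* maximizes Φ(λ) = Σ_{j=1}^T μ_j·λ_j/(λ_j + s_j) over all λ ∈ ℝ^T with λ_j ≥ 0 for all j and Σ_{j=1}^T λ_j ≤ G. -/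
open Finset Real

lemma stmt7_pointwise (s μ δ x : ℝ) (hs : 0 < s) (hμ : 0 < μ) (hδ : 0 < δ)
    (hx : 0 ≤ x) :
    μ * x / (x + s) - δ * x ≤
      μ * (max (Real.sqrt (μ * s / δ) - s) 0) /
        ((max (Real.sqrt (μ * s / δ) - s) 0) + s) -
      δ * (max (Real.sqrt (μ * s / δ) - s) 0) := by
  set r := Real.sqrt (μ * s / δ) with hr
  have hnn : 0 ≤ μ * s / δ := by positivity
  have hr2 : r ^ 2 = μ * s / δ := Real.sq_sqrt hnn
  have hp : 0 < x + s := by linarith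
  by_cases hcase : r ≤ s
  · have ha : max (r - s) 0 = 0 := max_eq_right (by linarith)
    rw [ha]
    have hμs : μ ≤ δ * s := by
      have h1 : μ * s / δ ≤ s ^ 2 := by nlinarith [Real.sqrt_nonneg (μ * s / δ)]
      have h2 : μ * s ≤ δ * s ^ 2 := by
        rw [div_le_iff₀ hδ] at h1; nlinarith
      nlinarith
    have h3 : μ * x / (x + s) ≤ δ * x := by
      rw [div_le_iff₀ hp]
      nlinarith [mul_le_mul_of_nonneg_right hμs hx, mul_nonneg (mul_nonneg hδ.le hx) hx]
    simp only [mul_zero, zero_div, zero_add, sub_zero]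
    linarith
  · push_neg at hcase
    have hrpos : 0 < r := lt_trans hs hcase
    have ha : max (r - s) 0 = r - s := max_eq_left (by linarith)
    rw [ha, sub_add_cancel]
    have hmuS : μ * s = δ * r ^ 2 := by
      field_simp at hr2; linarith [hr2]
    have e1 : μ * x / (x + s) = μ - μ * s / (x + s) := by
      field_simp; ring
    have e2 : μ * (r - s) / r = μ - μ * s / r := by
      field_simp
    have h3 : μ * s / r = δ * r := by
      rw [div_eq_iff (ne_of_gt hrpos)]; nlinarith
    have h4 : 2 * δ * r - δ * (x + s) ≤ μ * s / (x + s) := by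
      rw [le_div_iff₀ hp]
      nlinarith [sq_nonneg (x + s - r)]
    rw [e1, e2, h3]
    linarith

/-- If `λ*` and a multiplier `δ > 0` satisfy the KKT water-filling form
`λ*_j = max{√(μ_j s_j/δ) − s_j, 0}` for all `j` together with `Σ_j λ*_j = G`, then `λ*`
maximizes `Φ(λ) = Σ_j μ_j·λ_j/(λ_j+s_j)` over `{λ : λ_j ≥ 0, Σ_j λ_j ≤ G}`. -/
theorem stmt7 (T : ℕ) (hT : 0 < T) (s μ : Fin T → ℝ)
    (hs : ∀ j, 0 < s j) (hμ : ∀ j, 0 < μ j) (G : ℝ) (hG : 0 < G)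
    (lam : Fin T → ℝ) (δ : ℝ) (hδ : 0 < δ)
    (hlam : ∀ j, lam j = max (Real.sqrt (μ j * s j / δ) - s j) 0)
    (hsum : (∑ j, lam j) = G) :
    ∀ l : Fin T → ℝ, (∀ j, 0 ≤ l j) → (∑ j, l j) ≤ G →
      (∑ j, μ j * l j / (l j + s j)) ≤ (∑ j, μ j * lam j / (lam j + s j)) := by
  intro l hl hlG
  have key : ∀ j, μ j * l j / (l j + s j) - δ * l j ≤
      μ j * lam j / (lam j + s j) - δ * lam j := by
    intro j
    rw [hlam j]
    exact stmt7_pointwise (s j) (μ j) δ (l j) (hs j) (hμ j) hδ (hl j)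
  have h1 : (∑ j, (μ j * l j / (l j + s j) - δ * l j)) ≤
      (∑ j, (μ j * lam j / (lam j + s j) - δ * lam j)) :=
    Finset.sum_le_sum fun j _ => key j
  rw [Finset.sum_sub_distrib, Finset.sum_sub_distrib, ← Finset.mul_sum, ← Finset.mul_sum,
    hsum] at h1
  have h2 : δ * (∑ j, l j) ≤ δ * G := by
    exact mul_le_mul_of_nonneg_left hlG hδ.le
  linarith
end

section
/- Let T be a positive integer, let s_1,…,s_T > 0, let μ_1,…,μ_T > 0, and let G > 0. Define α = Σ_{j=1}^T √(μ_j s_j) and β = G + Σ_{j=1}^T s_j. Then for every λ ∈ ℝ^T with λ_j ≥ 0 for all j and Σ_{j=1}^T λ_j ≤ G, one has Σ_{j=1}^T μ_j s_j/(λ_j + s_j) ≥ α²/β. -/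
open Finset Real

/-- For every feasible allocation `λ` (componentwise nonnegative with
`Σ_j λ_j ≤ G`), the total freshness loss satisfies `Σ_j μ_j s_j/(λ_j+s_j) ≥ α²/β`, where
`α = Σ_j √(μ_j s_j)` and `β = G + Σ_j s_j`. -/
theorem stmt8 (T : ℕ) (hT : 0 < T) (s μ : Fin T → ℝ)
    (hs : ∀ j, 0 < s j) (hμ : ∀ j, 0 < μ j) (G : ℝ) (hG : 0 < G)
    (α β : ℝ) (hα : α = ∑ j, Real.sqrt (μ j * s j)) (hβ : β = G + ∑ j, s j)
    (l : Fin T → ℝ) (hl : ∀ j, 0 ≤ l j) (hsum : (∑ j, l j) ≤ G) :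
    α ^ 2 / β ≤ ∑ j, μ j * s j / (l j + s j) := by
  have hls : ∀ j, 0 < l j + s j := fun j => add_pos_of_nonneg_of_pos (hl j) (hs j)
  have hβpos : 0 < β := by
    rw [hβ]
    exact add_pos hG (Finset.sum_pos (fun j _ => hs j) (Finset.univ_nonempty_iff.2 ⟨⟨0, hT⟩⟩))
  have key : α ^ 2 ≤ (∑ j, (l j + s j)) * ∑ j, μ j * s j / (l j + s j) := by
    have cs := Finset.sum_mul_sq_le_sq_mul_sq Finset.univ
      (fun j => Real.sqrt (l j + s j)) (fun j => Real.sqrt (μ j * s j / (l j + s j)))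
    have h1 : ∀ j : Fin T, Real.sqrt (l j + s j) * Real.sqrt (μ j * s j / (l j + s j))
        = Real.sqrt (μ j * s j) := by
      intro j
      rw [← Real.sqrt_mul (hls j).le, mul_div_cancel₀ _ (hls j).ne']
    have h2 : ∀ j : Fin T, Real.sqrt (l j + s j) ^ 2 = l j + s j := fun j =>
      Real.sq_sqrt (hls j).le
    have h3 : ∀ j : Fin T, Real.sqrt (μ j * s j / (l j + s j)) ^ 2 = μ j * s j / (l j + s j) :=
      fun j => Real.sq_sqrt (div_nonneg (mul_pos (hμ j) (hs j)).le (hls j).le)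
    simp only [h1, h2, h3] at cs
    rw [hα]
    exact cs
  have hle : (∑ j, (l j + s j)) ≤ β := by
    rw [hβ, Finset.sum_add_distrib]
    exact add_le_add_left hsum _
  have hrhs : 0 ≤ ∑ j, μ j * s j / (l j + s j) :=
    Finset.sum_nonneg fun j _ => div_nonneg (mul_pos (hμ j) (hs j)).le (hls j).le
  rw [div_le_iff₀ hβpos]
  calc α ^ 2 ≤ (∑ j, (l j + s j)) * ∑ j, μ j * s j / (l j + s j) := key
    _ ≤ β * ∑ j, μ j * s j / (l j + s j) := mul_le_mul_of_nonneg_right hle hrhs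
    _ = (∑ j, μ j * s j / (l j + s j)) * β := mul_comm _ _
end

section
/- Let T be a positive integer, let s_1,…,s_T > 0, let μ_1,…,μ_T > 0, and let G > 0. If λ ∈ ℝ^T with λ_j ≥ 0 for all j and Σ_{j=1}^T λ_j = G maximizes Φ(λ) = Σ_{j=1}^T μ_j·λ_j/(λ_j + s_j) over the feasible set {λ : λ_j ≥ 0, Σ_j λ_j ≤ G}, and if indices i, j satisfy λ_i > 0 and μ_j/s_j ≤ μ_i s_i/(λ_i + s_i)², then λ_j = 0 whenever μ_j s_j/s_j² < μ_i s_i/(λ_i+s_i)²; equivalently, at an optimal allocation, any file whose marginal freshness gain at rate zero, μ_j/s_j, is strictly smaller than the marginal freshness gain μ_i s_i/(λ_i+s_i)² of some file receiving a positive rate must itself receive rate zero. -/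
open Finset Real

/-- RUPA elimination step: Let `λ` be an optimal allocation with tight
budget `Σ_j λ_j = G`. If `λ_i > 0` and the marginal freshness gain of file `j` at rate
zero, `μ_j/s_j = μ_j s_j/s_j²`, is at most — and in fact strictly smaller than — the
marginal freshness gain `μ_i s_i/(λ_i+s_i)²` of file `i`, then file `j` receives rate
zero: `λ_j = 0`. -/
theorem stmt18 (T : ℕ) (hT : 0 < T) (s μ : Fin T → ℝ)
    (hs : ∀ j, 0 < s j) (hμ : ∀ j, 0 < μ j) (G : ℝ) (hG : 0 < G)
    (lam : Fin T → ℝ) (hpos : ∀ j, 0 ≤ lam j) (hsum : (∑ j, lam j) = G)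
    (hmax : ∀ l : Fin T → ℝ, (∀ j, 0 ≤ l j) → (∑ j, l j) ≤ G →
      (∑ j, μ j * l j / (l j + s j)) ≤ (∑ j, μ j * lam j / (lam j + s j)))
    (i j : Fin T) (hi : 0 < lam i)
    (hle : μ j / s j ≤ μ i * s i / (lam i + s i) ^ 2)
    (hlt : μ j * s j / (s j) ^ 2 < μ i * s i / (lam i + s i) ^ 2) :
    lam j = 0 := by
  by_contra hj0
  have hb : 0 < lam j := lt_of_le_of_ne (hpos j) (Ne.symm hj0)
  have hsi := hs i; have hsj := hs j; have hmi := hμ i; have hmj := hμ j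
  have hij : i ≠ j := by
    rintro rfl
    have h1 : (s i) ^ 2 < (lam i + s i) ^ 2 := by nlinarith
    have h2 : μ i * s i / (lam i + s i) ^ 2 < μ i * s i / (s i) ^ 2 :=
      div_lt_div_of_pos_left (by positivity) (by positivity) h1
    linarith
  set a := lam i with ha
  set b := lam j with hbdef
  set si := s i with hsidef
  set sj := s j with hsjdef
  set mi := μ i with hmidef
  set mj := μ j with hmjdef
  have hAB : mj * sj * (a + si) ^ 2 < mi * si * (b + sj) ^ 2 := by
    rw [div_lt_div_iff₀ (by positivity) (by positivity)] at hlt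
    have h2 : mi * si * sj ^ 2 ≤ mi * si * (b + sj) ^ 2 := by
      have h3 : (0:ℝ) ≤ mi * si * (b ^ 2 + 2 * b * sj) := by positivity
      nlinarith [h3]
    linarith
  set C := mi * si * (b + sj) + mj * sj * (a + si) with hC
  have hCpos : 0 < C := by positivity
  set D := mi * si * (b + sj) ^ 2 - mj * sj * (a + si) ^ 2 with hD
  have hDpos : 0 < D := by simp only [hD]; linarith
  set ε := min b (D / C) / 2 with hε
  have hmpos : 0 < min b (D / C) := lt_min hb (div_pos hDpos hCpos)
  have hεpos : 0 < ε := by positivity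
  have hεb : ε < b :=
    lt_of_lt_of_le (half_lt_self hmpos) (min_le_left _ _)
  have hεC : ε * C < D := by
    have h1 : ε < D / C :=
      lt_of_lt_of_le (half_lt_self hmpos) (min_le_right _ _)
    exact (lt_div_iff₀ hCpos).mp h1
  have hkey : mj * sj * ((a + ε + si) * (a + si)) <
      mi * si * ((b + sj) * (b - ε + sj)) := by
    simp only [hD] at hεC
    nlinarith
  -- the perturbed allocation
  set l : Fin T → ℝ :=
    Function.update (Function.update lam i (a + ε)) j (b - ε) with hl
  have hli : l i = a + ε := by
    simp only [hl, Function.update_of_ne hij, Function.update_self]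
  have hlj : l j = b - ε := by simp only [hl, Function.update_self]
  have hlk : ∀ k, k ≠ i → k ≠ j → l k = lam k := by
    intro k hki hkj
    simp only [hl, Function.update_of_ne hkj, Function.update_of_ne hki]
  have hsupp : ∀ h : Fin T → ℝ, (∀ k, k ≠ i → k ≠ j → h k = 0) →
      (∑ k, h k) = h i + h j := by
    intro h hh
    rw [← Finset.sum_pair hij]
    refine (Finset.sum_subset (Finset.subset_univ _) ?_).symm
    intro x _ hx
    simp only [Finset.mem_insert, Finset.mem_singleton, not_or] at hx
    exact hh x hx.1 hx.2
  -- feasibility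
  have hlpos : ∀ k, 0 ≤ l k := by
    intro k
    by_cases hki : k = i
    · subst hki; rw [hli]; linarith
    · by_cases hkj : k = j
      · subst hkj; rw [hlj]; linarith
      · rw [hlk k hki hkj]; exact hpos k
  have hlsum : (∑ k, l k) = G := by
    have h0 : (∑ k, (l k - lam k)) = (l i - lam i) + (l j - lam j) := by
      apply hsupp
      intro k hki hkj
      rw [hlk k hki hkj]; ring
    rw [Finset.sum_sub_distrib, hsum] at h0
    rw [hli, hlj] at h0
    have : (∑ k, l k) - G = 0 := by rw [h0]; ring
    linarith
  -- the objective strictly increases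
  have hobj : (∑ k, (μ k * l k / (l k + s k) - μ k * lam k / (lam k + s k))) =
      (mi * (a + ε) / (a + ε + si) - mi * a / (a + si)) +
      (mj * (b - ε) / (b - ε + sj) - mj * b / (b + sj)) := by
    rw [hsupp _ (fun k hki hkj => by rw [hlk k hki hkj]; ring)]
    rw [hli, hlj]
  have hd1 : (0:ℝ) < a + ε + si := by linarith
  have hd2 : (0:ℝ) < a + si := by linarith
  have hd3 : (0:ℝ) < b - ε + sj := by linarith
  have hd4 : (0:ℝ) < b + sj := by linarith
  have hdiff : (mi * (a + ε) / (a + ε + si) - mi * a / (a + si)) +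
      (mj * (b - ε) / (b - ε + sj) - mj * b / (b + sj)) =
      ε * (mi * si * ((b + sj) * (b - ε + sj)) - mj * sj * ((a + ε + si) * (a + si))) /
        ((a + ε + si) * (a + si) * ((b + sj) * (b - ε + sj))) := by
    field_simp
    ring
  have hdiffpos : 0 < (mi * (a + ε) / (a + ε + si) - mi * a / (a + si)) +
      (mj * (b - ε) / (b - ε + sj) - mj * b / (b + sj)) := by
    rw [hdiff]
    apply div_pos (mul_pos hεpos (by linarith)) (by positivity)
  have hcontra := hmax l hlpos (le_of_eq hlsum)
  rw [Finset.sum_sub_distrib] at hobj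
  linarith
end
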